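/- Every-decision hindsight policy gradient: for any fixed (original) goal g', the gradient ∇η(θ) equals Σ_τ p(τ | g', θ) Σ_g p(g) Σ_{t=1}^{T−1} ∇ log p(a_t | s_t, g, θ) Σ_{t'=t+1}^T [ ∏_{k=1}^{T−1} p(a_k | s_k, g, θ)/p(a_k | s_k, g', θ) ] r(s_{t'}, g). -/

import Mathlib

open Finset

/-- A trajectory `s_1, a_1, …, s_T` with horizon `T = n + 1`. -/
abbrev Traj (S A : Type) (n : ℕ) := (Fin (n + 1) → S) × (Fin n → A)

/-- `p(τ ∣ g, θ) = p(s_1) ∏_{t=1}^{T-1} p(a_t ∣ s_t, g, θ) p(s_{t+1} ∣ s_t, a_t)`. -/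
def trajProb {S A G : Type} (n : ℕ) (init : S → ℝ) (trans : S → A → S → ℝ)
    (pol : ℝ → G → S → A → ℝ) (θ : ℝ) (g : G) (τ : Traj S A n) : ℝ :=
  init (τ.1 0) * ∏ t : Fin n,
    pol θ g (τ.1 t.castSucc) (τ.2 t) * trans (τ.1 t.castSucc) (τ.2 t) (τ.1 t.succ)

/-- The expected return `η(θ) = ∑_g p(g) ∑_τ p(τ ∣ g, θ) ∑_{t=1}^T r(s_t, g)`. -/
def expReturn {S A G : Type} [Fintype S] [Fintype A] [Fintype G] (n : ℕ)
    (init : S → ℝ) (trans : S → A → S → ℝ) (pol : ℝ → G → S → A → ℝ)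
    (pG : G → ℝ) (r : S → G → ℝ) (θ : ℝ) : ℝ :=
  ∑ g : G, pG g * ∑ τ : Traj S A n,
    trajProb n init trans pol θ g τ * ∑ t : Fin (n + 1), r (τ.1 t) g


def snocEquivAux (X : Type) (m : ℕ) : ((Fin m → X) × X) ≃ (Fin (m + 1) → X) where
  toFun p := Fin.snoc p.1 p.2
  invFun f := (Fin.init f, f (Fin.last m))
  left_inv p := by
    refine Prod.ext ?_ ?_
    · simp [Fin.init_snoc]
    · simp [Fin.snoc_last]
  right_inv f := Fin.snoc_init_self f

lemma sum_snoc {X : Type} [Fintype X] {M : Type} [AddCommMonoid M] (m : ℕ)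
    (F : (Fin (m + 1) → X) → M) :
    ∑ f : Fin (m + 1) → X, F f = ∑ u : Fin m → X, ∑ x : X, F (Fin.snoc u x) := by
  rw [← (snocEquivAux X m).sum_comp F, Fintype.sum_prod_type]
  rfl

lemma key {S A : Type} [Fintype S] [Fintype A]
    (trans : S → A → S → ℝ) (htrans1 : ∀ s a, ∑ s' : S, trans s a s' = 1) :
    ∀ (n : ℕ) (init : S → ℝ) (W : Fin n → S → A → ℝ) (j : Fin n),
      (∀ s, ∑ a : A, W j s a = 0) →
      (∀ k : Fin n, j < k → ∀ s, ∑ a : A, W k s a = 1) →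
      ∀ (φ : (Fin (n + 1) → S) → ℝ),
        (∀ σ σ' : Fin (n + 1) → S, (∀ i : Fin (n + 1), (i : ℕ) ≤ (j : ℕ) → σ i = σ' i) →
          φ σ = φ σ') →
      ∑ σ : Fin (n + 1) → S, ∑ a : Fin n → A, init (σ 0) *
        (∏ k : Fin n, W k (σ k.castSucc) (a k) * trans (σ k.castSucc) (a k) (σ k.succ)) *
          φ σ = 0 := by
  intro n
  induction n with
  | zero => intro init W j; exact j.elim0
  | succ m ih =>
    intro init W j hj hk φ hφ
    -- peel the last state and action
    rw [sum_snoc]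
    have hterm : ∀ (u : Fin (m + 1) → S) (x : S) (a : Fin (m + 1) → A),
        init ((Fin.snoc u x : Fin (m + 2) → S) 0) *
          (∏ k : Fin (m + 1), W k ((Fin.snoc u x : Fin (m + 2) → S) k.castSucc) (a k) *
            trans ((Fin.snoc u x : Fin (m + 2) → S) k.castSucc) (a k)
              ((Fin.snoc u x : Fin (m + 2) → S) k.succ)) * φ (Fin.snoc u x)
        = (init (u 0) *
            (∏ k : Fin m, W k.castSucc (u k.castSucc) (a k.castSucc) *
              trans (u k.castSucc) (a k.castSucc) (u k.succ)) * φ (Fin.snoc u (u 0))) *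
          (W (Fin.last m) (u (Fin.last m)) (a (Fin.last m)) *
            trans (u (Fin.last m)) (a (Fin.last m)) x) := by
      intro u x a
      have h0 : (Fin.snoc u x : Fin (m + 2) → S) 0 = u 0 := by
        have : (0 : Fin (m + 2)) = (0 : Fin (m + 1)).castSucc := by simp
        rw [this, Fin.snoc_castSucc]
      have hφeq : φ (Fin.snoc u x) = φ (Fin.snoc u (u 0)) := by
        apply hφ
        intro i hi
        have hlt : (i : ℕ) < m + 1 := lt_of_le_of_lt (hi.trans (Nat.le_of_lt_succ j.isLt)) (Nat.lt_succ_self m)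
        have : i = (⟨(i : ℕ), hlt⟩ : Fin (m + 1)).castSucc := by
          apply Fin.ext; rfl
        rw [this, Fin.snoc_castSucc, Fin.snoc_castSucc]
      rw [h0, hφeq, Fin.prod_univ_castSucc]
      have hc : ∀ k : Fin m,
          W k.castSucc ((Fin.snoc u x : Fin (m + 2) → S) k.castSucc.castSucc) (a k.castSucc) *
            trans ((Fin.snoc u x : Fin (m + 2) → S) k.castSucc.castSucc) (a k.castSucc)
              ((Fin.snoc u x : Fin (m + 2) → S) k.castSucc.succ)
          = W k.castSucc (u k.castSucc) (a k.castSucc) *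
              trans (u k.castSucc) (a k.castSucc) (u k.succ) := by
        intro k
        rw [Fin.snoc_castSucc, Fin.succ_castSucc, Fin.snoc_castSucc]
      rw [Finset.prod_congr rfl (fun k _ => hc k)]
      have hl1 : (Fin.snoc u x : Fin (m + 2) → S) (Fin.last m).castSucc = u (Fin.last m) :=
        Fin.snoc_castSucc ..
      have hl2 : (Fin.snoc u x : Fin (m + 2) → S) (Fin.last m).succ = x := by
        have : (Fin.last m).succ = Fin.last (m + 1) := rfl
        rw [this, Fin.snoc_last]
      rw [hl1, hl2]
      ring
    -- abbreviation for the "front" part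
    set Φ : (Fin (m + 1) → S) → ℝ := fun u => φ (Fin.snoc u (u 0)) with hΦ
    have step : ∀ u : Fin (m + 1) → S,
        (∑ x : S, ∑ a : Fin (m + 1) → A, init ((Fin.snoc u x : Fin (m + 2) → S) 0) *
          (∏ k : Fin (m + 1), W k ((Fin.snoc u x : Fin (m + 2) → S) k.castSucc) (a k) *
            trans ((Fin.snoc u x : Fin (m + 2) → S) k.castSucc) (a k)
              ((Fin.snoc u x : Fin (m + 2) → S) k.succ)) * φ (Fin.snoc u x))
        = (∑ b : Fin m → A, init (u 0) *
            (∏ k : Fin m, W k.castSucc (u k.castSucc) (b k) *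
              trans (u k.castSucc) (b k) (u k.succ)) * Φ u) *
          (∑ c : A, W (Fin.last m) (u (Fin.last m)) c) := by
      intro u
      rw [Finset.sum_comm]
      rw [sum_snoc m (fun a => ∑ x : S, _)]
      rw [Finset.sum_mul_sum]
      refine Finset.sum_congr rfl fun b _ => Finset.sum_congr rfl fun c _ => ?_
      have hsnocc : ∀ k : Fin m, (Fin.snoc b c : Fin (m + 1) → A) k.castSucc = b k :=
        fun k => Fin.snoc_castSucc ..
      have hsnocl : (Fin.snoc b c : Fin (m + 1) → A) (Fin.last m) = c := Fin.snoc_last ..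
      calc ∑ x : S, init ((Fin.snoc u x : Fin (m + 2) → S) 0) *
            (∏ k : Fin (m + 1), W k ((Fin.snoc u x : Fin (m + 2) → S) k.castSucc)
              ((Fin.snoc b c : Fin (m + 1) → A) k) *
              trans ((Fin.snoc u x : Fin (m + 2) → S) k.castSucc)
                ((Fin.snoc b c : Fin (m + 1) → A) k)
                ((Fin.snoc u x : Fin (m + 2) → S) k.succ)) * φ (Fin.snoc u x)
          = ∑ x : S, (init (u 0) *
              (∏ k : Fin m, W k.castSucc (u k.castSucc) (b k) *
                trans (u k.castSucc) (b k) (u k.succ)) * Φ u) *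
              (W (Fin.last m) (u (Fin.last m)) c * trans (u (Fin.last m)) c x) := by
            refine Finset.sum_congr rfl fun x _ => ?_
            rw [hterm u x (Fin.snoc b c)]
            simp only [hsnocc, hsnocl, hΦ]
        _ = (init (u 0) *
              (∏ k : Fin m, W k.castSucc (u k.castSucc) (b k) *
                trans (u k.castSucc) (b k) (u k.succ)) * Φ u) *
              (W (Fin.last m) (u (Fin.last m)) c) := by
            rw [← Finset.mul_sum, ← Finset.mul_sum, htrans1, mul_one]
    calc ∑ u : Fin (m + 1) → S, ∑ x : S, ∑ a : Fin (m + 1) → A,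
          init ((Fin.snoc u x : Fin (m + 2) → S) 0) *
          (∏ k : Fin (m + 1), W k ((Fin.snoc u x : Fin (m + 2) → S) k.castSucc) (a k) *
            trans ((Fin.snoc u x : Fin (m + 2) → S) k.castSucc) (a k)
              ((Fin.snoc u x : Fin (m + 2) → S) k.succ)) * φ (Fin.snoc u x)
        = ∑ u : Fin (m + 1) → S, (∑ b : Fin m → A, init (u 0) *
            (∏ k : Fin m, W k.castSucc (u k.castSucc) (b k) *
              trans (u k.castSucc) (b k) (u k.succ)) * Φ u) *
          (∑ c : A, W (Fin.last m) (u (Fin.last m)) c) :=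
          Finset.sum_congr rfl fun u _ => step u
      _ = 0 := by
          by_cases hjm : (j : ℕ) = m
          · have hjlast : j = Fin.last m := Fin.ext hjm
            have : ∀ s, ∑ c : A, W (Fin.last m) s c = 0 := by
              intro s; rw [← hjlast]; exact hj s
            simp [this]
          · have hjm' : (j : ℕ) < m :=
              lt_of_le_of_ne (Nat.le_of_lt_succ j.isLt) hjm
            have h1 : ∀ s, ∑ c : A, W (Fin.last m) s c = 1 := by
              intro s
              exact hk (Fin.last m) (by rw [Fin.lt_def]; exact hjm') s
            have hj' : ∀ s, ∑ a : A, W (⟨(j : ℕ), hjm'⟩ : Fin m).castSucc s a = 0 := by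
              have : (⟨(j : ℕ), hjm'⟩ : Fin m).castSucc = j := Fin.ext rfl
              rw [this]; exact hj
            have hk' : ∀ k : Fin m, (⟨(j : ℕ), hjm'⟩ : Fin m) < k →
                ∀ s, ∑ a : A, W k.castSucc s a = 1 := by
              intro k hlt s
              exact hk k.castSucc (by rw [Fin.lt_def]; exact hlt) s
            have hΦ' : ∀ σ σ' : Fin (m + 1) → S,
                (∀ i : Fin (m + 1), (i : ℕ) ≤ ((⟨(j : ℕ), hjm'⟩ : Fin m) : ℕ) → σ i = σ' i) →
                Φ σ = Φ σ' := by
              intro σ σ' hag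
              apply hφ
              intro i hi
              have hlt : (i : ℕ) < m + 1 :=
                lt_of_le_of_lt (hi.trans (Nat.le_of_lt_succ j.isLt)) (Nat.lt_succ_self m)
              have hi' : i = (⟨(i : ℕ), hlt⟩ : Fin (m + 1)).castSucc := Fin.ext rfl
              rw [hi', Fin.snoc_castSucc, Fin.snoc_castSucc,
                hag ⟨(i : ℕ), hlt⟩ hi]
            simp only [h1, mul_one]
            exact ih init (fun k => W k.castSucc) ⟨(j : ℕ), hjm'⟩ hj' hk' Φ hΦ'

section Aux
open Finset
variable {S A G : Type} [Fintype S] [Fintype A] [Fintype G]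

lemma score_div (pol : ℝ → G → S → A → ℝ)
    (hpol : ∀ (θ' : ℝ) (g : G) (s : S) (a : A), 0 < pol θ' g s a)
    (hpold : ∀ (g : G) (s : S) (a : A), Differentiable ℝ fun θ' => pol θ' g s a)
    (θ : ℝ) (g : G) (s : S) (a : A) :
    deriv (fun θ'' => Real.log (pol θ'' g s a)) θ =
      deriv (fun θ'' => pol θ'' g s a) θ / pol θ g s a :=
  (((hpold g s a) θ).hasDerivAt.log (ne_of_gt (hpol θ g s a))).deriv

lemma sum_deriv_pol_eq_zero (pol : ℝ → G → S → A → ℝ)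
    (hpold : ∀ (g : G) (s : S) (a : A), Differentiable ℝ fun θ' => pol θ' g s a)
    (hpol1 : ∀ (θ' : ℝ) (g : G) (s : S), ∑ a : A, pol θ' g s a = 1)
    (θ : ℝ) (g : G) (s : S) :
    ∑ a : A, deriv (fun θ' => pol θ' g s a) θ = 0 := by
  have hsum : HasDerivAt (fun θ' => ∑ a : A, pol θ' g s a)
      (∑ a : A, deriv (fun θ' => pol θ' g s a) θ) θ :=
    HasDerivAt.fun_sum fun a _ => ((hpold g s a) θ).hasDerivAt
  have hone : (fun θ' => ∑ a : A, pol θ' g s a) = fun _ => (1 : ℝ) :=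
    funext fun θ' => hpol1 θ' g s
  rw [hone] at hsum
  exact hsum.unique (hasDerivAt_const θ 1)

lemma hasDerivAt_trajProb (n : ℕ) (init : S → ℝ) (trans : S → A → S → ℝ)
    (pol : ℝ → G → S → A → ℝ)
    (hpol : ∀ (θ' : ℝ) (g : G) (s : S) (a : A), 0 < pol θ' g s a)
    (hpold : ∀ (g : G) (s : S) (a : A), Differentiable ℝ fun θ' => pol θ' g s a)
    (θ : ℝ) (g : G) (τ : Traj S A n) :
    HasDerivAt (fun θ' => trajProb n init trans pol θ' g τ)
      (trajProb n init trans pol θ g τ * ∑ t : Fin n,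
        deriv (fun θ' => pol θ' g (τ.1 t.castSucc) (τ.2 t)) θ /
          pol θ g (τ.1 t.castSucc) (τ.2 t)) θ := by
  classical
  have hf : ∀ t ∈ (univ : Finset (Fin n)), HasDerivAt
      (fun θ' => pol θ' g (τ.1 t.castSucc) (τ.2 t) *
        trans (τ.1 t.castSucc) (τ.2 t) (τ.1 t.succ))
      (deriv (fun θ' => pol θ' g (τ.1 t.castSucc) (τ.2 t)) θ *
        trans (τ.1 t.castSucc) (τ.2 t) (τ.1 t.succ)) θ :=
    fun t _ => (((hpold g (τ.1 t.castSucc) (τ.2 t)) θ).hasDerivAt).mul_const _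
  have h := (HasDerivAt.fun_finsetProd hf).const_mul (init (τ.1 0))
  convert h using 1
  · rfl
  · rfl
  · rfl
  rw [Finset.mul_sum, Finset.mul_sum]
  refine Finset.sum_congr rfl fun t _ => ?_
  have hP : trajProb n init trans pol θ g τ = init (τ.1 0) *
      ((pol θ g (τ.1 t.castSucc) (τ.2 t) * trans (τ.1 t.castSucc) (τ.2 t) (τ.1 t.succ)) *
        ∏ k ∈ univ.erase t, pol θ g (τ.1 k.castSucc) (τ.2 k) *
          trans (τ.1 k.castSucc) (τ.2 k) (τ.1 k.succ)) := by
    rw [trajProb, ← Finset.mul_prod_erase univ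
      (fun k => pol θ g (τ.1 k.castSucc) (τ.2 k) *
        trans (τ.1 k.castSucc) (τ.2 k) (τ.1 k.succ)) (mem_univ t)]
  rw [hP, smul_eq_mul]
  have hne : pol θ g (τ.1 t.castSucc) (τ.2 t) ≠ 0 := ne_of_gt (hpol θ g _ _)
  field_simp

lemma ratio_eq (n : ℕ) (init : S → ℝ) (trans : S → A → S → ℝ)
    (pol : ℝ → G → S → A → ℝ)
    (hpol : ∀ (θ' : ℝ) (g : G) (s : S) (a : A), 0 < pol θ' g s a)
    (θ : ℝ) (g g' : G) (τ : Traj S A n) :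
    trajProb n init trans pol θ g' τ *
      ∏ k : Fin n, pol θ g (τ.1 k.castSucc) (τ.2 k) / pol θ g' (τ.1 k.castSucc) (τ.2 k) =
    trajProb n init trans pol θ g τ := by
  rw [trajProb, trajProb, mul_assoc, ← Finset.prod_mul_distrib]
  congr 1
  refine Finset.prod_congr rfl fun k _ => ?_
  have hne : pol θ g' (τ.1 k.castSucc) (τ.2 k) ≠ 0 := ne_of_gt (hpol θ g' _ _)
  field_simp

lemma zero_part (n : ℕ) (init : S → ℝ) (trans : S → A → S → ℝ)
    (pol : ℝ → G → S → A → ℝ) (r : S → G → ℝ)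
    (htrans1 : ∀ s a, ∑ s' : S, trans s a s' = 1)
    (hpol : ∀ (θ' : ℝ) (g : G) (s : S) (a : A), 0 < pol θ' g s a)
    (hpold : ∀ (g : G) (s : S) (a : A), Differentiable ℝ fun θ' => pol θ' g s a)
    (hpol1 : ∀ (θ' : ℝ) (g : G) (s : S), ∑ a : A, pol θ' g s a = 1)
    (θ : ℝ) (g : G) (t : Fin n) (t' : Fin (n + 1)) (hle : (t' : ℕ) ≤ (t : ℕ)) :
    ∑ τ : Traj S A n, trajProb n init trans pol θ g τ *
      (deriv (fun θ' => pol θ' g (τ.1 t.castSucc) (τ.2 t)) θ /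
        pol θ g (τ.1 t.castSucc) (τ.2 t)) * r (τ.1 t') g = 0 := by
  classical
  rw [Fintype.sum_prod_type]
  have hkey := key trans htrans1 n init
    (fun k s a => if k = t then deriv (fun θ' => pol θ' g s a) θ else pol θ g s a) t
    (fun s => by
      simp only [if_pos rfl]
      exact sum_deriv_pol_eq_zero pol hpold hpol1 θ g s)
    (fun k hk s => by
      rw [Finset.sum_congr rfl fun a _ => if_neg (ne_of_gt hk)]
      exact hpol1 θ g s)
    (fun σ => r (σ t') g)
    (fun σ σ' hag => by show r (σ t') g = r (σ' t') g; rw [hag t' hle])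
  rw [← hkey]
  refine Finset.sum_congr rfl fun σ _ => Finset.sum_congr rfl fun a _ => ?_
  have hprod : (∏ k : Fin n,
      (if k = t then deriv (fun θ' => pol θ' g (σ k.castSucc) (a k)) θ
        else pol θ g (σ k.castSucc) (a k)) * trans (σ k.castSucc) (a k) (σ k.succ))
      = (deriv (fun θ' => pol θ' g (σ t.castSucc) (a t)) θ *
          trans (σ t.castSucc) (a t) (σ t.succ)) *
        ∏ k ∈ univ.erase t, pol θ g (σ k.castSucc) (a k) *
          trans (σ k.castSucc) (a k) (σ k.succ) := by
    rw [← Finset.mul_prod_erase univ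
      (fun k => (if k = t then deriv (fun θ' => pol θ' g (σ k.castSucc) (a k)) θ
        else pol θ g (σ k.castSucc) (a k)) * trans (σ k.castSucc) (a k) (σ k.succ))
      (mem_univ t), if_pos rfl]
    congr 1
    exact Finset.prod_congr rfl fun k hk => by
      rw [if_neg (Finset.mem_erase.mp hk).1]
  have hP : trajProb n init trans pol θ g (σ, a) = init (σ 0) *
      ((pol θ g (σ t.castSucc) (a t) * trans (σ t.castSucc) (a t) (σ t.succ)) *
        ∏ k ∈ univ.erase t, pol θ g (σ k.castSucc) (a k) *
          trans (σ k.castSucc) (a k) (σ k.succ)) := by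
    rw [trajProb, ← Finset.mul_prod_erase univ
      (fun k => pol θ g (σ k.castSucc) (a k) * trans (σ k.castSucc) (a k) (σ k.succ))
      (mem_univ t)]
  rw [hP, hprod]
  have hne : pol θ g (σ t.castSucc) (a t) ≠ 0 := ne_of_gt (hpol θ g _ _)
  field_simp

end Aux

/-- the every-decision hindsight policy gradient. For any fixed original
goal `g'`, `∇η(θ) = ∑_τ p(τ∣g',θ) ∑_g p(g) ∑_{t=1}^{T-1} ∇ log p(a_t∣s_t,g,θ)
∑_{t'=t+1}^T [∏_{k=1}^{T-1} p(a_k∣s_k,g,θ)/p(a_k∣s_k,g',θ)] r(s_{t'}, g)`. -/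
theorem every_decision_hindsight_policy_gradient {S A G : Type}
    [Fintype S] [Fintype A] [Fintype G]
    (n : ℕ) (init : S → ℝ) (trans : S → A → S → ℝ) (pol : ℝ → G → S → A → ℝ)
    (pG : G → ℝ) (r : S → G → ℝ)
    (hinit : ∀ s, 0 < init s) (hinit1 : ∑ s : S, init s = 1)
    (htrans : ∀ s a s', 0 < trans s a s') (htrans1 : ∀ s a, ∑ s' : S, trans s a s' = 1)
    (hpol : ∀ (θ' : ℝ) (g : G) (s : S) (a : A), 0 < pol θ' g s a)
    (hpold : ∀ (g : G) (s : S) (a : A), Differentiable ℝ fun θ' => pol θ' g s a)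
    (hpol1 : ∀ (θ' : ℝ) (g : G) (s : S), ∑ a : A, pol θ' g s a = 1)
    (hpG : ∀ g, 0 ≤ pG g) (hpG1 : ∑ g : G, pG g = 1)
    (θ : ℝ) (g' : G) :
    deriv (expReturn n init trans pol pG r) θ =
      ∑ τ : Traj S A n, trajProb n init trans pol θ g' τ *
        ∑ g : G, pG g * ∑ t : Fin n,
          deriv (fun θ'' => Real.log (pol θ'' g (τ.1 t.castSucc) (τ.2 t))) θ *
            ∑ t' ∈ univ.filter (fun t' : Fin (n + 1) => t.castSucc < t'),
              (∏ k : Fin n,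
                  pol θ g (τ.1 k.castSucc) (τ.2 k) / pol θ g' (τ.1 k.castSucc) (τ.2 k)) *
                r (τ.1 t') g := by
  classical
  -- the derivative of the expected return
  have hD : HasDerivAt (expReturn n init trans pol pG r)
      (∑ g : G, pG g * ∑ τ : Traj S A n,
        (trajProb n init trans pol θ g τ * ∑ t : Fin n,
          deriv (fun θ' => pol θ' g (τ.1 t.castSucc) (τ.2 t)) θ /
            pol θ g (τ.1 t.castSucc) (τ.2 t)) *
        ∑ t' : Fin (n + 1), r (τ.1 t') g) θ := by
    have hfun : expReturn n init trans pol pG r = fun θ' => ∑ g : G, pG g *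
        ∑ τ : Traj S A n, trajProb n init trans pol θ' g τ *
          ∑ t' : Fin (n + 1), r (τ.1 t') g := rfl
    rw [hfun]
    exact HasDerivAt.fun_sum fun g _ =>
      (HasDerivAt.fun_sum fun τ _ =>
        (hasDerivAt_trajProb n init trans pol hpol hpold θ g τ).mul_const _).const_mul _
  -- per-goal rearrangement of the derivative, discarding the vanishing past-reward terms
  have hg : ∀ g : G, (∑ τ : Traj S A n,
        (trajProb n init trans pol θ g τ * ∑ t : Fin n,
          deriv (fun θ' => pol θ' g (τ.1 t.castSucc) (τ.2 t)) θ /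
            pol θ g (τ.1 t.castSucc) (τ.2 t)) *
        ∑ t' : Fin (n + 1), r (τ.1 t') g)
      = ∑ t : Fin n, ∑ t' ∈ univ.filter (fun t' : Fin (n + 1) => t.castSucc < t'),
          ∑ τ : Traj S A n, trajProb n init trans pol θ g τ *
            (deriv (fun θ' => pol θ' g (τ.1 t.castSucc) (τ.2 t)) θ /
              pol θ g (τ.1 t.castSucc) (τ.2 t)) * r (τ.1 t') g := by
    intro g
    calc (∑ τ : Traj S A n,
          (trajProb n init trans pol θ g τ * ∑ t : Fin n,
            deriv (fun θ' => pol θ' g (τ.1 t.castSucc) (τ.2 t)) θ /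
              pol θ g (τ.1 t.castSucc) (τ.2 t)) *
          ∑ t' : Fin (n + 1), r (τ.1 t') g)
        = ∑ τ : Traj S A n, ∑ t : Fin n, ∑ t' : Fin (n + 1),
            trajProb n init trans pol θ g τ *
              (deriv (fun θ' => pol θ' g (τ.1 t.castSucc) (τ.2 t)) θ /
                pol θ g (τ.1 t.castSucc) (τ.2 t)) * r (τ.1 t') g := by
          refine Finset.sum_congr rfl fun τ _ => ?_
          have hms : trajProb n init trans pol θ g τ * (∑ t : Fin n,
              deriv (fun θ' => pol θ' g (τ.1 t.castSucc) (τ.2 t)) θ /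
                pol θ g (τ.1 t.castSucc) (τ.2 t)) = ∑ t : Fin n,
              trajProb n init trans pol θ g τ *
                (deriv (fun θ' => pol θ' g (τ.1 t.castSucc) (τ.2 t)) θ /
                  pol θ g (τ.1 t.castSucc) (τ.2 t)) := Finset.mul_sum _ _ _
          rw [hms, Finset.sum_mul_sum]
      _ = ∑ t : Fin n, ∑ t' : Fin (n + 1), ∑ τ : Traj S A n,
            trajProb n init trans pol θ g τ *
              (deriv (fun θ' => pol θ' g (τ.1 t.castSucc) (τ.2 t)) θ /
                pol θ g (τ.1 t.castSucc) (τ.2 t)) * r (τ.1 t') g := by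
          rw [Finset.sum_comm]
          exact Finset.sum_congr rfl fun t _ => Finset.sum_comm
      _ = ∑ t : Fin n, ∑ t' ∈ univ.filter (fun t' : Fin (n + 1) => t.castSucc < t'),
            ∑ τ : Traj S A n, trajProb n init trans pol θ g τ *
              (deriv (fun θ' => pol θ' g (τ.1 t.castSucc) (τ.2 t)) θ /
                pol θ g (τ.1 t.castSucc) (τ.2 t)) * r (τ.1 t') g := by
          refine Finset.sum_congr rfl fun t _ => ?_
          rw [← Finset.sum_filter_add_sum_filter_not univ
            (fun t' : Fin (n + 1) => t.castSucc < t')]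
          have h0 : ∑ t' ∈ univ.filter (fun t' : Fin (n + 1) => ¬ t.castSucc < t'),
              ∑ τ : Traj S A n, trajProb n init trans pol θ g τ *
                (deriv (fun θ' => pol θ' g (τ.1 t.castSucc) (τ.2 t)) θ /
                  pol θ g (τ.1 t.castSucc) (τ.2 t)) * r (τ.1 t') g = 0 := by
            refine Finset.sum_eq_zero fun t' ht' => ?_
            have hnlt := (Finset.mem_filter.mp ht').2
            exact zero_part n init trans pol r htrans1 hpol hpold hpol1 θ g t t'
              (by simpa [Fin.le_def] using not_lt.mp hnlt)
          rw [h0, add_zero]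
  -- rearrangement of the right-hand side
  have hR : (∑ τ : Traj S A n, trajProb n init trans pol θ g' τ *
        ∑ g : G, pG g * ∑ t : Fin n,
          deriv (fun θ'' => Real.log (pol θ'' g (τ.1 t.castSucc) (τ.2 t))) θ *
            ∑ t' ∈ univ.filter (fun t' : Fin (n + 1) => t.castSucc < t'),
              (∏ k : Fin n,
                  pol θ g (τ.1 k.castSucc) (τ.2 k) / pol θ g' (τ.1 k.castSucc) (τ.2 k)) *
                r (τ.1 t') g)
      = ∑ g : G, pG g * ∑ t : Fin n,
          ∑ t' ∈ univ.filter (fun t' : Fin (n + 1) => t.castSucc < t'),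
            ∑ τ : Traj S A n, trajProb n init trans pol θ g τ *
              (deriv (fun θ' => pol θ' g (τ.1 t.castSucc) (τ.2 t)) θ /
                pol θ g (τ.1 t.castSucc) (τ.2 t)) * r (τ.1 t') g := by
    calc (∑ τ : Traj S A n, trajProb n init trans pol θ g' τ *
          ∑ g : G, pG g * ∑ t : Fin n,
            deriv (fun θ'' => Real.log (pol θ'' g (τ.1 t.castSucc) (τ.2 t))) θ *
              ∑ t' ∈ univ.filter (fun t' : Fin (n + 1) => t.castSucc < t'),
                (∏ k : Fin n,
                    pol θ g (τ.1 k.castSucc) (τ.2 k) / pol θ g' (τ.1 k.castSucc) (τ.2 k)) *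
                  r (τ.1 t') g)
        = ∑ τ : Traj S A n, ∑ g : G, ∑ t : Fin n,
            ∑ t' ∈ univ.filter (fun t' : Fin (n + 1) => t.castSucc < t'),
              pG g * (trajProb n init trans pol θ g τ *
                (deriv (fun θ' => pol θ' g (τ.1 t.castSucc) (τ.2 t)) θ /
                  pol θ g (τ.1 t.castSucc) (τ.2 t)) * r (τ.1 t') g) := by
          simp only [Finset.mul_sum]
          refine Finset.sum_congr rfl fun τ _ => Finset.sum_congr rfl fun g _ =>
            Finset.sum_congr rfl fun t _ => Finset.sum_congr rfl fun t' _ => ?_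
          rw [score_div pol hpol hpold θ g (τ.1 t.castSucc) (τ.2 t),
            ← ratio_eq n init trans pol hpol θ g g' τ]
          ring
      _ = ∑ g : G, ∑ t : Fin n,
            ∑ t' ∈ univ.filter (fun t' : Fin (n + 1) => t.castSucc < t'),
              ∑ τ : Traj S A n,
              pG g * (trajProb n init trans pol θ g τ *
                (deriv (fun θ' => pol θ' g (τ.1 t.castSucc) (τ.2 t)) θ /
                  pol θ g (τ.1 t.castSucc) (τ.2 t)) * r (τ.1 t') g) := by
          rw [Finset.sum_comm]
          refine Finset.sum_congr rfl fun g _ => ?_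
          rw [Finset.sum_comm]
          exact Finset.sum_congr rfl fun t _ => Finset.sum_comm
      _ = ∑ g : G, pG g * ∑ t : Fin n,
            ∑ t' ∈ univ.filter (fun t' : Fin (n + 1) => t.castSucc < t'),
              ∑ τ : Traj S A n, trajProb n init trans pol θ g τ *
                (deriv (fun θ' => pol θ' g (τ.1 t.castSucc) (τ.2 t)) θ /
                  pol θ g (τ.1 t.castSucc) (τ.2 t)) * r (τ.1 t') g := by
          refine Finset.sum_congr rfl fun g _ => ?_
          simp only [← Finset.mul_sum]
  rw [hD.deriv, hR]
  exact Finset.sum_congr rfl fun g _ => by rw [hg g]
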